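/- Final size relation for the two-patch SIR single-outbreak model: let (S_i, I_i, R_i), i ∈ {1,2}, be a global nonnegative solution with S_i(t) > 0 for all t ≥ 0, R_i(0) = 0, and such that the limits S_i(∞) = lim_{t→∞} S_i(t) exist and are strictly positive and I_i(t) → 0 as t → ∞. Then for i ∈ {1,2}: log(S_i(0)/S_i(∞)) = K_{i1}(1 − S_1(∞)/N_1) + K_{i2}(1 − S_2(∞)/N_2), where K_{i1} = (coefficient of I_1 in Ṡ_i/S_i)·N_1/α_1 and K_{i2} = (coefficient of I_2 in Ṡ_i/S_i)·N_2/α_2; explicitly K_{11} = a_1 N_1/α_1, K_{12} = c N_2/α_2, K_{21} = c N_1/α_1, K_{22} = a_2 N_2/α_2. -/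

import Mathlib

open Matrix Filter

noncomputable section

/-- D₁ = p₁₁N₁ + p₂₁N₂, the effective population of patch 1. -/
def sirD1 (q11 q21 N1 N2 : ℝ) : ℝ := q11 * N1 + q21 * N2

/-- D₂ = p₁₂N₁ + p₂₂N₂, the effective population of patch 2. -/
def sirD2 (q12 q22 N1 N2 : ℝ) : ℝ := q12 * N1 + q22 * N2

/-- a₁ = β₁p₁₁²/D₁ + β₂p₁₂²/D₂. -/
def sirA1 (β1 β2 q11 q12 q21 q22 N1 N2 : ℝ) : ℝ :=
  β1 * q11 ^ 2 / sirD1 q11 q21 N1 N2 + β2 * q12 ^ 2 / sirD2 q12 q22 N1 N2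

/-- a₂ = β₁p₂₁²/D₁ + β₂p₂₂²/D₂. -/
def sirA2 (β1 β2 q11 q12 q21 q22 N1 N2 : ℝ) : ℝ :=
  β1 * q21 ^ 2 / sirD1 q11 q21 N1 N2 + β2 * q22 ^ 2 / sirD2 q12 q22 N1 N2

/-- c = β₁p₁₁p₂₁/D₁ + β₂p₁₂p₂₂/D₂. -/
def sirC (β1 β2 q11 q12 q21 q22 N1 N2 : ℝ) : ℝ :=
  β1 * q11 * q21 / sirD1 q11 q21 N1 N2 + β2 * q12 * q22 / sirD2 q12 q22 N1 N2

/-- `(S₁,I₁,R₁,S₂,I₂,R₂)` is a solution of the two-patch SIR single-outbreak model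
İᵢ = aᵢSᵢIᵢ + cSᵢIⱼ − αᵢIᵢ, Ṡᵢ = −aᵢSᵢIᵢ − cSᵢIⱼ, Ṙᵢ = αᵢIᵢ on [0,∞). -/
def SIRSol (a1 a2 c α1 α2 : ℝ) (S1 I1 R1 S2 I2 R2 : ℝ → ℝ) : Prop :=
  ∀ t ∈ Set.Ici (0 : ℝ),
    HasDerivWithinAt S1 (-(a1 * S1 t * I1 t) - c * S1 t * I2 t) (Set.Ici 0) t ∧
    HasDerivWithinAt I1 (a1 * S1 t * I1 t + c * S1 t * I2 t - α1 * I1 t) (Set.Ici 0) t ∧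
    HasDerivWithinAt R1 (α1 * I1 t) (Set.Ici 0) t ∧
    HasDerivWithinAt S2 (-(c * S2 t * I1 t) - a2 * S2 t * I2 t) (Set.Ici 0) t ∧
    HasDerivWithinAt I2 (c * S2 t * I1 t + a2 * S2 t * I2 t - α2 * I2 t) (Set.Ici 0) t ∧
    HasDerivWithinAt R2 (α2 * I2 t) (Set.Ici 0) t

/-- Nonnegativity of all components of a solution, and conservation Sᵢ+Iᵢ+Rᵢ = Nᵢ. -/
def SIRNonnegConserved (N1 N2 : ℝ) (S1 I1 R1 S2 I2 R2 : ℝ → ℝ) : Prop :=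
  ∀ t ∈ Set.Ici (0 : ℝ),
    (0 ≤ S1 t ∧ 0 ≤ I1 t ∧ 0 ≤ R1 t ∧ 0 ≤ S2 t ∧ 0 ≤ I2 t ∧ 0 ≤ R2 t) ∧
    S1 t + I1 t + R1 t = N1 ∧ S2 t + I2 t + R2 t = N2

/-- Auxiliary: single-patch final size computation. If S' = -(k1 I1 + k2 I2) S,
Rⱼ' = αⱼ Iⱼ, S > 0, Rⱼ(0) = 0, S → Sinf > 0, Rⱼ → Lⱼ, then
log(S 0 / Sinf) = (k1/α1) L1 + (k2/α2) L2. -/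
lemma sir_patch_final_size (α1 α2 k1 k2 : ℝ) (hα1 : 0 < α1) (hα2 : 0 < α2)
    (S I1 I2 R1 R2 : ℝ → ℝ)
    (hS : ∀ t ∈ Set.Ici (0:ℝ),
      HasDerivWithinAt S (-(k1 * S t * I1 t) - k2 * S t * I2 t) (Set.Ici 0) t)
    (hR1 : ∀ t ∈ Set.Ici (0:ℝ), HasDerivWithinAt R1 (α1 * I1 t) (Set.Ici 0) t)
    (hR2 : ∀ t ∈ Set.Ici (0:ℝ), HasDerivWithinAt R2 (α2 * I2 t) (Set.Ici 0) t)
    (hSpos : ∀ t ∈ Set.Ici (0:ℝ), 0 < S t)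
    (hR10 : R1 0 = 0) (hR20 : R2 0 = 0)
    (Sinf L1 L2 : ℝ) (hSinf : 0 < Sinf)
    (hlimS : Tendsto S atTop (nhds Sinf))
    (hlimR1 : Tendsto R1 atTop (nhds L1))
    (hlimR2 : Tendsto R2 atTop (nhds L2)) :
    Real.log (S 0 / Sinf) = (k1 / α1) * L1 + (k2 / α2) * L2 := by
  set F : ℝ → ℝ := fun t => Real.log (S t) + (k1 / α1) * R1 t + (k2 / α2) * R2 t with hF
  have hderiv : ∀ t ∈ Set.Ici (0:ℝ), HasDerivWithinAt F 0 (Set.Ici 0) t := by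
    intro t ht
    have hSt : S t ≠ 0 := (hSpos t ht).ne'
    have h1 := ((hS t ht).log hSt).add (((hR1 t ht).const_mul (k1 / α1)))
    have h2 := h1.add (((hR2 t ht).const_mul (k2 / α2)))
    have heq : (-(k1 * S t * I1 t) - k2 * S t * I2 t) / S t
        + (k1 / α1) * (α1 * I1 t) + (k2 / α2) * (α2 * I2 t) = 0 := by
      field_simp
      ring
    rw [heq] at h2
    exact h2
  have hconst : ∀ t ∈ Set.Ici (0:ℝ), F t = F 0 := by
    intro t ht
    have hcont : ContinuousOn F (Set.Icc 0 t) := by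
      intro x hx
      exact ((hderiv x (Set.mem_Ici.2 hx.1)).continuousWithinAt).mono
        (fun y hy => hy.1)
    have := constant_of_has_deriv_right_zero hcont (fun x hx =>
      (hderiv x (Set.mem_Ici.2 hx.1)).mono (Set.Ici_subset_Ici.2 hx.1))
    exact this t ⟨ht, le_refl t⟩
  have hlimF : Tendsto F atTop
      (nhds (Real.log Sinf + (k1 / α1) * L1 + (k2 / α2) * L2)) := by
    exact ((hlimS.log hSinf.ne').add (hlimR1.const_mul (k1 / α1))).add
      (hlimR2.const_mul (k2 / α2))
  have hlimF' : Tendsto F atTop (nhds (F 0)) := by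
    have : ∀ᶠ t in atTop, F t = F 0 := by
      filter_upwards [eventually_ge_atTop (0:ℝ)] with t ht using hconst t ht
    exact Tendsto.congr' (Filter.EventuallyEq.symm this) tendsto_const_nhds
  have huniq : F 0 = Real.log Sinf + (k1 / α1) * L1 + (k2 / α2) * L2 :=
    tendsto_nhds_unique hlimF' hlimF
  have hF0 : F 0 = Real.log (S 0) := by simp [hF, hR10, hR20]
  have hS0 : S 0 ≠ 0 := (hSpos 0 Set.self_mem_Ici).ne'
  rw [Real.log_div hS0 hSinf.ne']
  rw [hF0] at huniq
  linarith

/-- final size relation for the two-patch SIR single-outbreak model: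
log(Sᵢ(0)/Sᵢ(∞)) = K_{i1}(1 − S₁(∞)/N₁) + K_{i2}(1 − S₂(∞)/N₂) with
K₁₁ = a₁N₁/α₁, K₁₂ = cN₂/α₂, K₂₁ = cN₁/α₁, K₂₂ = a₂N₂/α₂. -/
theorem sir_final_size_relation
    (β1 β2 α1 α2 q11 q12 q21 q22 N1 N2 : ℝ)
    (hβ1 : 0 < β1) (hβ2 : 0 < β2) (hα1 : 0 < α1) (hα2 : 0 < α2)
    (hq11 : 0 ≤ q11 ∧ q11 ≤ 1) (hq12 : 0 ≤ q12 ∧ q12 ≤ 1)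
    (hq21 : 0 ≤ q21 ∧ q21 ≤ 1) (hq22 : 0 ≤ q22 ∧ q22 ≤ 1)
    (hrow1 : q11 + q12 = 1) (hrow2 : q21 + q22 = 1)
    (hN1 : 0 < N1) (hN2 : 0 < N2)
    (hD1 : 0 < sirD1 q11 q21 N1 N2) (hD2 : 0 < sirD2 q12 q22 N1 N2)
    (S1 I1 R1 S2 I2 R2 : ℝ → ℝ)
    (hsol : SIRSol (sirA1 β1 β2 q11 q12 q21 q22 N1 N2)
      (sirA2 β1 β2 q11 q12 q21 q22 N1 N2) (sirC β1 β2 q11 q12 q21 q22 N1 N2)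
      α1 α2 S1 I1 R1 S2 I2 R2)
    (hnc : SIRNonnegConserved N1 N2 S1 I1 R1 S2 I2 R2)
    (hSpos : ∀ t ∈ Set.Ici (0 : ℝ), 0 < S1 t ∧ 0 < S2 t)
    (hR0' : R1 0 = 0 ∧ R2 0 = 0)
    (S1inf S2inf : ℝ) (hS1inf : 0 < S1inf) (hS2inf : 0 < S2inf)
    (hlim1 : Tendsto S1 atTop (nhds S1inf)) (hlim2 : Tendsto S2 atTop (nhds S2inf))
    (hIlim1 : Tendsto I1 atTop (nhds 0)) (hIlim2 : Tendsto I2 atTop (nhds 0)) :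
    Real.log (S1 0 / S1inf) =
      (sirA1 β1 β2 q11 q12 q21 q22 N1 N2 * N1 / α1) * (1 - S1inf / N1) +
      (sirC β1 β2 q11 q12 q21 q22 N1 N2 * N2 / α2) * (1 - S2inf / N2) ∧
    Real.log (S2 0 / S2inf) =
      (sirC β1 β2 q11 q12 q21 q22 N1 N2 * N1 / α1) * (1 - S1inf / N1) +
      (sirA2 β1 β2 q11 q12 q21 q22 N1 N2 * N2 / α2) * (1 - S2inf / N2) := by
  set a1 := sirA1 β1 β2 q11 q12 q21 q22 N1 N2
  set a2 := sirA2 β1 β2 q11 q12 q21 q22 N1 N2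
  set c := sirC β1 β2 q11 q12 q21 q22 N1 N2
  have hS1 : ∀ t ∈ Set.Ici (0:ℝ),
      HasDerivWithinAt S1 (-(a1 * S1 t * I1 t) - c * S1 t * I2 t) (Set.Ici 0) t :=
    fun t ht => (hsol t ht).1
  have hS2 : ∀ t ∈ Set.Ici (0:ℝ),
      HasDerivWithinAt S2 (-(c * S2 t * I1 t) - a2 * S2 t * I2 t) (Set.Ici 0) t :=
    fun t ht => (hsol t ht).2.2.2.1
  have hR1 : ∀ t ∈ Set.Ici (0:ℝ), HasDerivWithinAt R1 (α1 * I1 t) (Set.Ici 0) t :=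
    fun t ht => (hsol t ht).2.2.1
  have hR2 : ∀ t ∈ Set.Ici (0:ℝ), HasDerivWithinAt R2 (α2 * I2 t) (Set.Ici 0) t :=
    fun t ht => (hsol t ht).2.2.2.2.2
  have hRlim1 : Tendsto R1 atTop (nhds (N1 - S1inf)) := by
    have heq : ∀ᶠ t in atTop, N1 - S1 t - I1 t = R1 t := by
      filter_upwards [eventually_ge_atTop (0:ℝ)] with t ht
      have := (hnc t ht).2.1; linarith
    exact Tendsto.congr' heq (by
      simpa using ((tendsto_const_nhds.sub hlim1).sub hIlim1))
  have hRlim2 : Tendsto R2 atTop (nhds (N2 - S2inf)) := by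
    have heq : ∀ᶠ t in atTop, N2 - S2 t - I2 t = R2 t := by
      filter_upwards [eventually_ge_atTop (0:ℝ)] with t ht
      have := (hnc t ht).2.2; linarith
    exact Tendsto.congr' heq (by
      simpa using ((tendsto_const_nhds.sub hlim2).sub hIlim2))
  have key1 := sir_patch_final_size α1 α2 a1 c hα1 hα2 S1 I1 I2 R1 R2
    hS1 hR1 hR2 (fun t ht => (hSpos t ht).1) hR0'.1 hR0'.2
    S1inf (N1 - S1inf) (N2 - S2inf) hS1inf hlim1 hRlim1 hRlim2
  have key2 := sir_patch_final_size α1 α2 c a2 hα1 hα2 S2 I1 I2 R1 R2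
    hS2 hR1 hR2 (fun t ht => (hSpos t ht).2) hR0'.1 hR0'.2
    S2inf (N1 - S1inf) (N2 - S2inf) hS2inf hlim2 hRlim1 hRlim2
  constructor
  · rw [key1]
    field_simp
  · rw [key2]
    field_simp
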